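/- Let X be a totally disconnected compact Hausdorff space, R a commutative Banach ring isolated at 0, and K ⊆ X a closed subset. Then every continuous function f : K → R extends to a continuous function f̃ : X → R with ‖f̃‖_∞ = ‖f‖_∞ (a Tietze-type extension with equal sup norm). -/

import Mathlib

open Set

/-- In a compact Hausdorff totally disconnected space, a compact set inside an open set
can be surrounded by a clopen set inside the open set. -/
lemma auxA {X : Type*} [TopologicalSpace X] [CompactSpace X] [T2Space X]
    [TotallyDisconnectedSpace X] {C U : Set X} (hC : IsCompact C) (hU : IsOpen U)
    (hCU : C ⊆ U) : ∃ V : Set X, IsClopen V ∧ C ⊆ V ∧ V ⊆ U := by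
  choose W hW using fun x : C => compact_exists_isClopen_in_isOpen hU (hCU x.2)
  obtain ⟨t, ht⟩ := hC.elim_finite_subcover (fun x : C => W x) (fun x => (hW x).1.2)
    (fun x hx => Set.mem_iUnion.mpr ⟨⟨x, hx⟩, (hW _).2.1⟩)
  refine ⟨⋃ i ∈ t, W i, ?_, ht, ?_⟩
  · exact Set.Finite.isClopen_biUnion t.finite_toSet (fun i _ => (hW i).1)
  · exact Set.iUnion₂_subset fun i _ => (hW i).2.2

/-- Pairwise disjoint compact sets in a profinite space can be separated by
pairwise disjoint clopen sets. -/
lemma auxB {X : Type*} [TopologicalSpace X] [CompactSpace X] [T2Space X]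
    [TotallyDisconnectedSpace X] {ι : Type*} [Fintype ι] (C : ι → Set X)
    (hC : ∀ i, IsCompact (C i)) (hd : Pairwise (Function.onFun Disjoint C)) :
    ∃ V : ι → Set X, (∀ i, IsClopen (V i)) ∧ (∀ i, C i ⊆ V i) ∧
      Pairwise (Function.onFun Disjoint V) := by
  classical
  have hcl : ∀ i, IsClosed (C i) := fun i => (hC i).isClosed
  have hopen : ∀ i : ι, IsOpen (⋃ j ∈ ({i}ᶜ : Set ι), C j)ᶜ := fun i => by
    exact (Set.Finite.isClosed_biUnion (Set.toFinite _) fun j _ => hcl j).isOpen_compl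
  have hsub : ∀ i : ι, C i ⊆ (⋃ j ∈ ({i}ᶜ : Set ι), C j)ᶜ := by
    intro i x hx hmem
    obtain ⟨j, hj, hxj⟩ := Set.mem_iUnion₂.mp hmem
    exact (hd (Ne.symm hj)).le_bot ⟨hx, hxj⟩
  choose W hWc hWC hWU using fun i => auxA (hC i) (hopen i) (hsub i)
  -- key: C i is disjoint from W j whenever j ≠ i
  have key : ∀ i j : ι, j ≠ i → Disjoint (C i) (W j) := by
    intro i j hji
    rw [Set.disjoint_left]
    intro x hxC hxW
    exact (hWU j hxW) (Set.mem_iUnion₂.mpr ⟨i, Ne.symm hji, hxC⟩)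
  let e := Fintype.equivFin ι
  refine ⟨fun i => W i \ ⋃ j ∈ Finset.univ.filter (fun j => e j < e i), W j, ?_, ?_, ?_⟩
  · intro i
    exact (hWc i).diff (isClopen_biUnion_finset fun j _ => hWc j)
  · intro i x hx
    refine ⟨hWC i hx, fun hmem => ?_⟩
    obtain ⟨j, hj, hxj⟩ := Set.mem_iUnion₂.mp hmem
    simp only [Finset.mem_filter] at hj
    have hji : j ≠ i := fun h => by simp [h] at hj
    exact (key i j hji).le_bot ⟨hx, hxj⟩
  · intro i j hij
    rcases lt_trichotomy (e i) (e j) with h | h | h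
    · rw [Function.onFun, Set.disjoint_left]
      intro x hxi hxj
      exact hxj.2 (Set.mem_iUnion₂.mpr ⟨i, by simp [h], hxi.1⟩)
    · exact absurd (e.injective h) hij
    · rw [Function.onFun, Set.disjoint_left]
      intro x hxi hxj
      exact hxi.2 (Set.mem_iUnion₂.mpr ⟨j, by simp [h], hxj.1⟩)

/-- Tietze-type extension with equal sup norm: for `X` totally disconnected compact
Hausdorff and `R` a Banach ring isolated at `0`, any continuous `f : K → R` on a closed
subset `K ⊆ X` extends to a continuous `g : X → R` with the same sup norm. -/
theorem stmt10 (X R : Type*) [TopologicalSpace X] [CompactSpace X] [T2Space X]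
    [TotallyDisconnectedSpace X] [NormedCommRing R] [CompleteSpace R]
    (hiso : ∃ ε > (0 : ℝ), ∀ r : R, ‖r‖ < ε → r = 0)
    (K : Set X) (hK : IsClosed K) (f : K → R) (hf : Continuous f) :
    ∃ g : X → R, Continuous g ∧ (∀ x : K, g x.1 = f x) ∧
      (⨆ x : X, ‖g x‖) = ⨆ x : K, ‖f x‖ := by
  classical
  -- R is discrete
  have hdisc : DiscreteTopology R := by
    obtain ⟨ε, hε, h⟩ := hiso
    refine discreteTopology_iff_isOpen_singleton.mpr fun r => ?_
    have : {r} = Metric.ball r ε := by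
      ext a
      simp only [Set.mem_singleton_iff, Metric.mem_ball, dist_eq_norm]
      constructor
      · rintro rfl; simpa using hε
      · intro ha; exact sub_eq_zero.mp (h _ ha)
    rw [this]; exact Metric.isOpen_ball
  rcases isEmpty_or_nonempty K with hKe | hKne
  · refine ⟨fun _ => 0, continuous_const, fun x => absurd x.2 (by simpa using hKe.false x), ?_⟩
    rcases isEmpty_or_nonempty X with hXe | hXne
    · haveI := hXe
      rw [Real.iSup_of_isEmpty, Real.iSup_of_isEmpty]
    · rw [show (⨆ x : K, ‖f x‖) = 0 from Real.iSup_of_isEmpty _]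
      simp only [norm_zero]
      exact ciSup_const
  -- K nonempty: f has finite range
  haveI : CompactSpace K := isCompact_iff_compactSpace.mp hK.isCompact
  have hfin : (Set.range f).Finite := (isCompact_range hf).finite_of_discrete
  haveI : Fintype (Set.range f) := hfin.fintype
  set ι := ↥(Set.range f)
  -- compact fibers
  set C : ι → Set X := fun r => Subtype.val '' (f ⁻¹' {(r : R)}) with hCdef
  have hCcomp : ∀ r, IsCompact (C r) := by
    intro r
    exact ((isClosed_singleton.preimage hf).isCompact).image continuous_subtype_val
  have hCd : Pairwise (Function.onFun Disjoint C) := by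
    intro r s hrs
    rw [Function.onFun, Set.disjoint_left]
    rintro x ⟨y, hy, rfl⟩ ⟨z, hz, hzy⟩
    have : y = z := Subtype.ext hzy.symm
    subst this
    exact hrs (Subtype.ext (hy.symm.trans hz))
  obtain ⟨V, hVc, hVC, hVd⟩ := auxB C hCcomp hCd
  set g : X → R := fun x => ∑ r : ι, Set.indicator (V r) (fun _ => (r : R)) x with hgdef
  have hgcont : Continuous g := by
    apply continuous_finset_sum
    intro r _
    exact continuous_indicator (by simp [(hVc r).frontier_eq]) continuous_const.continuousOn
  -- each point lies in at most one V r
  have huniq : ∀ x : X, ∀ r s : ι, x ∈ V r → x ∈ V s → r = s := by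
    intro x r s hr hs
    by_contra h
    exact (hVd h).le_bot ⟨hr, hs⟩
  -- value of g when x ∈ V r
  have hval : ∀ (x : X) (r : ι), x ∈ V r → g x = (r : R) := by
    intro x r hx
    simp only [hgdef]
    rw [Finset.sum_eq_single r]
    · simp [Set.indicator_of_mem hx]
    · intro s _ hs
      apply Set.indicator_of_notMem
      exact fun hxs => hs (huniq x s r hxs hx)
    · simp
  have hval0 : ∀ x : X, (∀ r : ι, x ∉ V r) → g x = 0 := by
    intro x hx
    simp only [hgdef]
    apply Finset.sum_eq_zero
    intro r _
    exact Set.indicator_of_notMem (hx r) _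
  -- extension property
  have hext : ∀ x : K, g x.1 = f x := by
    intro x
    have hmem : (x : X) ∈ C ⟨f x, Set.mem_range_self x⟩ := ⟨x, rfl, rfl⟩
    exact hval _ _ (hVC _ hmem)
  refine ⟨g, hgcont, hext, ?_⟩
  -- sup norm equality
  have hXne : Nonempty X := ⟨(Classical.arbitrary K : K).1⟩
  have bddF : BddAbove (Set.range fun y : K => ‖f y‖) := by
    have : (Set.range fun y : K => ‖f y‖) = norm '' Set.range f := by
      rw [← Set.range_comp]; rfl
    rw [this]
    exact (hfin.image _).bddAbove
  have hF0 : 0 ≤ ⨆ y : K, ‖f y‖ :=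
    le_trans (norm_nonneg _) (le_ciSup bddF (Classical.arbitrary K))
  have hgle : ∀ x : X, ‖g x‖ ≤ ⨆ y : K, ‖f y‖ := by
    intro x
    by_cases hx : ∃ r : ι, x ∈ V r
    · obtain ⟨r, hr⟩ := hx
      rw [hval x r hr]
      obtain ⟨y, hy⟩ := r.2
      calc ‖(r : R)‖ = ‖f y‖ := by rw [hy]
        _ ≤ ⨆ y : K, ‖f y‖ := le_ciSup bddF y
    · rw [hval0 x (fun r hr => hx ⟨r, hr⟩)]
      simpa using hF0
  have bddG : BddAbove (Set.range fun x : X => ‖g x‖) :=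
    ⟨⨆ y : K, ‖f y‖, by rintro a ⟨x, rfl⟩; exact hgle x⟩
  apply le_antisymm
  · exact ciSup_le hgle
  · apply ciSup_le
    intro y
    calc ‖f y‖ = ‖g y.1‖ := by rw [hext y]
      _ ≤ ⨆ x : X, ‖g x‖ := le_ciSup bddG y.1
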